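/- arXiv:1509.05660 — 2 statements merged into one kernel-verified Lean document; each statement's English description precedes it below -/
import Mathlib

section
/- Let G(∘), G(∗) be group operations on a finite set G with H = {a ∈ G : a∘b = a∗b for all b} nonempty. If b ∈ H∘a (the right coset of H containing a with respect to ∘), then dist_a(∘,∗) = dist_b(∘,∗). -/
/-- The multiplication of a group structure `S` on the set `G`. -/
def mulOf {G : Type*} (S : Group G) : G → G → G := fun a b => letI := S; a * b

/-- `dist_a(∘,∗)`: the number of `b` with `a∘b ≠ a∗b`. -/
def rowDist {G : Type*} [Fintype G] [DecidableEq G] (S T : Group G) (a : G) : ℕ :=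
  (Finset.univ.filter fun b => mulOf S a b ≠ mulOf T a b).card

/-- `dist(∘,∗)`: the number of pairs `(a,b)` with `a∘b ≠ a∗b`. -/
def tableDist {G : Type*} [Fintype G] [DecidableEq G] (S T : Group G) : ℕ :=
  (Finset.univ.filter fun p : G × G => mulOf S p.1 p.2 ≠ mulOf T p.1 p.2).card


lemma mulOf_assoc {G : Type*} (S : Group G) (x y z : G) :
    mulOf S (mulOf S x y) z = mulOf S x (mulOf S y z) := by
  letI := S; exact mul_assoc x y z

lemma mulOf_left_cancel {G : Type*} (S : Group G) {x y z : G}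
    (h : mulOf S x y = mulOf S x z) : y = z := by
  letI := S; exact mul_left_cancel h

theorem rowDist_constant_on_cosets {G : Type*} [Fintype G] [DecidableEq G] (S T : Group G)
    (H : Set G) (hH : H = {x | ∀ y, mulOf S x y = mulOf T x y})
    (hne : H.Nonempty) (a b : G) (hb : ∃ h ∈ H, b = mulOf S h a) :
    rowDist S T a = rowDist S T b := by
  obtain ⟨h, hh, rfl⟩ := hb
  subst hH
  have hhy : ∀ z, mulOf S h z = mulOf T h z := hh
  unfold rowDist
  congr 1
  apply Finset.filter_congr
  intro y _
  have eq1 : mulOf S (mulOf S h a) y = mulOf S h (mulOf S a y) := mulOf_assoc S h a y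
  have eq2 : mulOf T (mulOf S h a) y = mulOf S h (mulOf T a y) := by
    rw [hhy a, mulOf_assoc T h a y, ← hhy (mulOf T a y)]
  rw [eq1, eq2]
  simp only [ne_eq, eq_iff_iff]
  exact not_congr ⟨fun he => he ▸ rfl, fun he => mulOf_left_cancel S he ▸ rfl⟩
end

section
/- Let p ≥ 11 be a prime, let G(∘) be the cyclic group of order 2p and G(∗) the dihedral group of order 2p defined on the same set G. Then dist(∘,∗) > 12p − 20. (Consequently the minimal distance between non-isomorphic groups of order 2p exceeds the minimal distance between isomorphic copies.) -/
/-- The integer power instance coming from a group structure `S`. -/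
def zpowInst {G : Type*} (S : Group G) : Pow G ℤ := letI := S; inferInstance

/-- The multiplication instance coming from a group structure `S`. -/
def mulInst {G : Type*} (S : Group G) : Mul G := letI := S; inferInstance

/-- The identity element of a group structure `S`. -/
def oneOf {G : Type*} (S : Group G) : G := letI := S; 1

section Helpers

variable {G : Type*} (S : Group G)

lemma mulOf_assoc_s10 (a b c : G) : mulOf S (mulOf S a b) c = mulOf S a (mulOf S b c) :=
  letI := S; mul_assoc a b c

lemma mulOf_one_mul (a : G) : mulOf S (oneOf S) a = a :=
  letI := S; one_mul a

lemma mulOf_mul_one (a : G) : mulOf S a (oneOf S) = a :=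
  letI := S; mul_one a

lemma mulOf_left_cancel_s10 {a b c : G} (h : mulOf S a b = mulOf S a c) : b = c :=
  letI := S; mul_left_cancel h

lemma mulOf_right_cancel {a b c : G} (h : mulOf S a b = mulOf S c b) : a = c :=
  letI := S; mul_right_cancel h

end Helpers

section RowCol

variable {G : Type*} [Fintype G] [DecidableEq G] (S T : Group G)

/-- If `a` is involutory for `T` but not for `S`, its row has at least half mismatches. -/
lemma row_half {a : G} (hTa : mulOf T a a = oneOf T) (hSa : mulOf S a a ≠ oneOf S) :
    Fintype.card G ≤ 2 * (Finset.univ.filter fun b => mulOf S a b ≠ mulOf T a b).card := by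
  classical
  set B := Finset.univ.filter (fun b => mulOf S a b = mulOf T a b) with hB
  set D := Finset.univ.filter (fun b => mulOf S a b ≠ mulOf T a b) with hD
  have hsum : B.card + D.card = Fintype.card G := by
    rw [hB, hD, ← Finset.card_univ]
    exact Finset.card_filter_add_card_filter_not _
  have hle : B.card ≤ D.card := by
    apply Finset.card_le_card_of_injOn (fun b => mulOf S a b)
    · intro b hb
      rw [hB, Finset.mem_coe, Finset.mem_filter] at hb
      rw [hD, Finset.mem_coe, Finset.mem_filter]
      refine ⟨Finset.mem_univ _, fun hcon => ?_⟩
      apply hSa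
      have h1 : mulOf T a (mulOf S a b) = b := by
        rw [hb.2, ← mulOf_assoc_s10, hTa, mulOf_one_mul]
      have h2 : mulOf S (mulOf S a a) b = b := by
        rw [mulOf_assoc_s10]; rw [hcon, h1]
      have h3 : mulOf S (mulOf S a a) b = mulOf S (oneOf S) b := by
        rw [h2, mulOf_one_mul]
      exact mulOf_right_cancel S h3
    · intro b _ c _ h
      exact mulOf_left_cancel_s10 S h
  omega

/-- If `b` is involutory for `T` but not for `S`, its column has at least half mismatches. -/
lemma col_half {b : G} (hTb : mulOf T b b = oneOf T) (hSb : mulOf S b b ≠ oneOf S) :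
    Fintype.card G ≤ 2 * (Finset.univ.filter fun a => mulOf S a b ≠ mulOf T a b).card := by
  classical
  set B := Finset.univ.filter (fun a => mulOf S a b = mulOf T a b) with hB
  set D := Finset.univ.filter (fun a => mulOf S a b ≠ mulOf T a b) with hD
  have hsum : B.card + D.card = Fintype.card G := by
    rw [hB, hD, ← Finset.card_univ]
    exact Finset.card_filter_add_card_filter_not _
  have hle : B.card ≤ D.card := by
    apply Finset.card_le_card_of_injOn (fun a => mulOf S a b)
    · intro a ha
      rw [hB, Finset.mem_coe, Finset.mem_filter] at ha
      rw [hD, Finset.mem_coe, Finset.mem_filter]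
      refine ⟨Finset.mem_univ _, fun hcon => ?_⟩
      apply hSb
      have h1 : mulOf T (mulOf S a b) b = a := by
        rw [ha.2, mulOf_assoc_s10, hTb, mulOf_mul_one]
      have h2 : mulOf S a (mulOf S b b) = a := by
        rw [← mulOf_assoc_s10]; rw [hcon, h1]
      have h3 : mulOf S a (mulOf S b b) = mulOf S a (oneOf S) := by
        rw [h2, mulOf_mul_one]
      exact mulOf_left_cancel_s10 S h3
    · intro a _ c _ h
      exact mulOf_right_cancel S h
  omega

end RowCol

/-- In the dihedral group of odd prime order parameter, there are exactly `p + 1`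
solutions of `x * x = 1`. -/
lemma dihedral_sq_card {p : ℕ} [NeZero p] (hp : p.Prime) (hp2 : p ≠ 2) :
    (Finset.univ.filter fun x : DihedralGroup p => x * x = 1).card = p + 1 := by
  haveI : Fact p.Prime := ⟨hp⟩
  have horder : ∀ i : ZMod p, i + i = 0 → i = 0 := by
    intro i h
    have h2 : (2 : ZMod p) * i = 0 := by rw [two_mul]; exact h
    rcases mul_eq_zero.mp h2 with h' | h'
    · exfalso
      have hc : ((2 : ℕ) : ZMod p) = 0 := by exact_mod_cast h'
      rw [ZMod.natCast_eq_zero_iff] at hc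
      have h2' := Nat.le_of_dvd (by norm_num) hc
      have := hp.two_le
      omega
    · exact h'
  have hsrinj : Function.Injective (DihedralGroup.sr (n := p)) := fun a b h => by
    injection h
  have hset : (Finset.univ.filter fun x : DihedralGroup p => x * x = 1) =
      insert (DihedralGroup.r 0)
        ((Finset.univ : Finset (ZMod p)).image DihedralGroup.sr) := by
    ext x
    rw [Finset.mem_filter, Finset.mem_insert, Finset.mem_image]
    constructor
    · rintro ⟨-, h⟩
      rcases x with i | i
      · left
        rw [DihedralGroup.r_mul_r, DihedralGroup.one_def] at h
        have hi : i + i = 0 := by injection h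
        rw [horder i hi]
      · right
        exact ⟨i, Finset.mem_univ i, rfl⟩
    · rintro (rfl | ⟨j, -, rfl⟩)
      · exact ⟨Finset.mem_univ _, by
          rw [DihedralGroup.r_mul_r, add_zero, DihedralGroup.one_def]⟩
      · exact ⟨Finset.mem_univ _, DihedralGroup.sr_mul_self j⟩
  have hnm : DihedralGroup.r (0 : ZMod p) ∉
      (Finset.univ : Finset (ZMod p)).image DihedralGroup.sr := by
    simp only [Finset.mem_image]
    rintro ⟨j, -, hj⟩
    exact absurd hj (by intro h; cases h)
  rw [hset, Finset.card_insert_of_notMem hnm, Finset.card_image_of_injective _ hsrinj,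
    Finset.card_univ, ZMod.card, add_comm]

set_option maxHeartbeats 2000000 in
theorem dist_cyclic_dihedral_2p {G : Type*} [Fintype G] [DecidableEq G]
    (p : ℕ) (hp : p.Prime) (hp11 : 11 ≤ p)
    (hcard : Fintype.card G = 2 * p) (S T : Group G)
    (hS : @IsCyclic G (zpowInst S))
    (hT : Nonempty (@MulEquiv G (DihedralGroup p) (mulInst T)
      (inferInstance : Mul (DihedralGroup p)))) :
    12 * p - 20 < tableDist S T := by
  classical
  haveI : NeZero p := ⟨hp.ne_zero⟩
  obtain ⟨e⟩ := hT
  -- the sets of square roots of the identity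
  set A := Finset.univ.filter (fun a : G => mulOf T a a = oneOf T) with hA
  set Bs := Finset.univ.filter (fun a : G => mulOf S a a = oneOf S) with hBs
  -- |A| = p + 1
  have hAcard : A.card = p + 1 := by
    letI := T
    have e' : G ≃* DihedralGroup p := e
    have hmem : ∀ a : G, mulOf T a a = oneOf T ↔ e' a * e' a = 1 := by
      intro a
      have : mulOf T a a = oneOf T ↔ a * a = 1 := Iff.rfl
      rw [this, ← map_mul e', ← e'.injective.eq_iff, map_one e']
    rw [hA]
    rw [show (Finset.univ.filter fun a : G => mulOf T a a = oneOf T)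
        = Finset.univ.filter (fun a : G => e' a * e' a = 1) from
      Finset.filter_congr (fun a _ => by rw [hmem a])]
    rw [← dihedral_sq_card hp (by omega)]
    apply Finset.card_bij (fun a _ => e' a)
    · intro a ha
      simp only [Finset.mem_filter, Finset.mem_univ, true_and] at ha ⊢
      exact ha
    · intro a _ b _ h
      exact e'.injective h
    · intro x hx
      simp only [Finset.mem_filter, Finset.mem_univ, true_and] at hx
      exact ⟨e'.symm x, by simp [Finset.mem_filter, hx], by simp⟩
  -- |Bs| ≤ 2
  have hBcard : Bs.card ≤ 2 := by
    letI := S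
    haveI : IsCyclic G := hS
    have : Bs = Finset.univ.filter (fun a : G => a ^ 2 = 1) := by
      rw [hBs]
      apply Finset.filter_congr
      intro a _
      have h1 : mulOf S a a = oneOf S ↔ a * a = 1 := Iff.rfl
      rw [h1, pow_two]
    rw [this]
    exact IsCyclic.card_pow_eq_one_le (by norm_num)
  -- the set of T-involutory, non-S-involutory elements
  set R := Finset.univ.filter
    (fun a : G => mulOf T a a = oneOf T ∧ mulOf S a a ≠ oneOf S) with hR
  have hRsubA : R ⊆ A := by
    intro a ha
    rw [hR, Finset.mem_filter] at ha
    rw [hA, Finset.mem_filter]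
    exact ⟨ha.1, ha.2.1⟩
  have hAsub : A ⊆ R ∪ Bs := by
    intro a ha
    rw [hA, Finset.mem_filter] at ha
    by_cases h : mulOf S a a = oneOf S
    · exact Finset.mem_union_right _ (by rw [hBs, Finset.mem_filter]; exact ⟨ha.1, h⟩)
    · exact Finset.mem_union_left _ (by rw [hR, Finset.mem_filter]; exact ⟨ha.1, ha.2, h⟩)
  have hRlb : p + 1 ≤ R.card + 2 := by
    calc p + 1 = A.card := hAcard.symm
    _ ≤ (R ∪ Bs).card := Finset.card_le_card hAsub
    _ ≤ R.card + Bs.card := Finset.card_union_le _ _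
    _ ≤ R.card + 2 := by omega
  have hRub : R.card ≤ p + 1 := hAcard ▸ Finset.card_le_card hRsubA
  -- mismatch set
  set M := Finset.univ.filter
    (fun q : G × G => mulOf S q.1 q.2 ≠ mulOf T q.1 q.2) with hM
  have htd : tableDist S T = M.card := rfl
  set X := M.filter (fun q => q.1 ∈ R) with hX
  set Y := M.filter (fun q => q.2 ∈ R) with hY
  -- row bound: X.card ≥ p * R.card
  have hXcard : p * R.card ≤ X.card := by
    have hfib : X.card = ∑ a ∈ R, (X.filter fun q => q.1 = a).card := by
      apply Finset.card_eq_sum_card_fiberwise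
      intro q hq
      rw [hX, Finset.mem_coe, Finset.mem_filter] at hq
      exact hq.2
    rw [hfib]
    have : ∀ a ∈ R, p ≤ (X.filter fun q => q.1 = a).card := by
      intro a ha
      rw [hR, Finset.mem_filter] at ha
      have hrow := row_half S T ha.2.1 ha.2.2
      rw [hcard] at hrow
      have hinj : (Finset.univ.filter fun b => mulOf S a b ≠ mulOf T a b).card
          ≤ (X.filter fun q => q.1 = a).card := by
        apply Finset.card_le_card_of_injOn (fun b => (a, b))
        · intro b hb
          rw [Finset.mem_coe, Finset.mem_filter] at hb
          rw [Finset.mem_coe, Finset.mem_filter, hX, Finset.mem_filter, hM, Finset.mem_filter]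
          exact ⟨⟨⟨Finset.mem_univ _, hb.2⟩, by rw [hR, Finset.mem_filter]; exact ⟨Finset.mem_univ _, ha.2⟩⟩, rfl⟩
        · intro b _ c _ h
          exact (Prod.mk.injEq _ _ _ _ ▸ h).2
      omega
    calc p * R.card = ∑ _a ∈ R, p := by rw [Finset.sum_const, smul_eq_mul, mul_comm]
    _ ≤ ∑ a ∈ R, (X.filter fun q => q.1 = a).card := Finset.sum_le_sum this
  -- column bound: Y.card ≥ p * R.card
  have hYcard : p * R.card ≤ Y.card := by
    have hfib : Y.card = ∑ b ∈ R, (Y.filter fun q => q.2 = b).card := by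
      apply Finset.card_eq_sum_card_fiberwise
      intro q hq
      rw [hY, Finset.mem_coe, Finset.mem_filter] at hq
      exact hq.2
    rw [hfib]
    have : ∀ b ∈ R, p ≤ (Y.filter fun q => q.2 = b).card := by
      intro b hb
      rw [hR, Finset.mem_filter] at hb
      have hcol := col_half S T hb.2.1 hb.2.2
      rw [hcard] at hcol
      have hinj : (Finset.univ.filter fun a => mulOf S a b ≠ mulOf T a b).card
          ≤ (Y.filter fun q => q.2 = b).card := by
        apply Finset.card_le_card_of_injOn (fun a => (a, b))
        · intro a ha
          rw [Finset.mem_coe, Finset.mem_filter] at ha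
          rw [Finset.mem_coe, Finset.mem_filter, hY, Finset.mem_filter, hM, Finset.mem_filter]
          exact ⟨⟨⟨Finset.mem_univ _, ha.2⟩, by rw [hR, Finset.mem_filter]; exact ⟨Finset.mem_univ _, hb.2⟩⟩, rfl⟩
        · intro a _ c _ h
          exact (Prod.mk.injEq _ _ _ _ ▸ h).1
      omega
    calc p * R.card = ∑ _b ∈ R, p := by rw [Finset.sum_const, smul_eq_mul, mul_comm]
    _ ≤ ∑ b ∈ R, (Y.filter fun q => q.2 = b).card := Finset.sum_le_sum this
  -- inclusion-exclusion
  have hXY : X.card + Y.card = (X ∪ Y).card + (X ∩ Y).card :=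
    (Finset.card_union_add_card_inter X Y).symm
  have hXuY : (X ∪ Y).card ≤ M.card := by
    apply Finset.card_le_card
    intro q hq
    rcases Finset.mem_union.mp hq with h | h
    · exact Finset.mem_of_mem_filter _ h
    · exact Finset.mem_of_mem_filter _ h
  have hXiY : (X ∩ Y).card ≤ R.card * R.card := by
    have : X ∩ Y ⊆ R ×ˢ R := by
      intro q hq
      rw [Finset.mem_inter] at hq
      have h1 := (Finset.mem_filter.mp hq.1).2
      have h2 := (Finset.mem_filter.mp hq.2).2
      exact Finset.mem_product.mpr ⟨h1, h2⟩
    calc (X ∩ Y).card ≤ (R ×ˢ R).card := Finset.card_le_card this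
    _ = R.card * R.card := Finset.card_product _ _
  -- final arithmetic
  rw [htd]
  have key : 2 * (p * R.card) ≤ M.card + R.card * R.card := by omega
  set r := R.card
  have hfin : 12 * p < M.card + 20 := by
    zify at key hRlb hRub hp11 ⊢
    have h1 : (0 : ℤ) ≤ (r : ℤ) + 1 - p := by omega
    have h2 : (0 : ℤ) ≤ (p : ℤ) + 1 - r := by omega
    have h3 : (0 : ℤ) ≤ ((p : ℤ) - 11) * ((p : ℤ) - 1) := by
      apply mul_nonneg <;> omega
    nlinarith [mul_nonneg h1 h2]
  omega
end
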